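/- For every undirected graph G with n labeled vertices and k labeled edges, Z_G(−1,−1) = (−1)^n · #{Φ ∈ AC_{n,k} : |Φ| = G}, i.e. the value of the Potts partition function at (q,v) = (−1,−1) equals (−1)^n times the number of acyclic orientations of G (assignments of a direction to each edge of G producing a directed graph with no directed cycle; this number is 0 if G has a loop). -/

import Mathlib

open Finset

open scoped Classical Nat

noncomputable section

/-- A directed graph with `n` labeled vertices and `k` labeled edges:
the `ℓ`-th edge is the ordered pair `G ℓ = (a, b)` (an edge from `a` to `b`; loops allowed). -/
abbrev DG (n k : ℕ) := Fin k → Fin n × Fin n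

namespace DG

variable {n k : ℕ}

/-- `step G S a b`: the subgraph of `G` with edge-label set `S` has an edge from `a` to `b`. -/
def step (G : DG n k) (S : Finset (Fin k)) (a b : Fin n) : Prop :=
  ∃ e ∈ S, G e = (a, b)

/-- The subgraph of `G` with edge-label set `S` contains no directed cycle. -/
def Acyclic (G : DG n k) (S : Finset (Fin k)) : Prop :=
  ∀ a : Fin n, ¬ Relation.TransGen (step G S) a a

/-- The edge `e` lies on a directed cycle of the subgraph of `G` with edge set `S`
(equivalently, there is a directed path from the head of `e` back to its tail). -/
def OnCycle (G : DG n k) (S : Finset (Fin k)) (e : Fin k) : Prop :=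
  Relation.ReflTransGen (step G S) (G e).2 (G e).1

/-- Strongly semiconnected: every edge lies on a directed cycle. -/
def SSC (G : DG n k) (S : Finset (Fin k)) : Prop :=
  ∀ e ∈ S, OnCycle G S e

/-- Strongly connected: every ordered pair of vertices is joined by a directed path. -/
def StronglyConnected (G : DG n k) (S : Finset (Fin k)) : Prop :=
  ∀ a b : Fin n, Relation.ReflTransGen (step G S) a b

/-- Adjacency in the underlying undirected graph. -/
def adj (G : DG n k) (S : Finset (Fin k)) (a b : Fin n) : Prop :=
  ∃ e ∈ S, G e = (a, b) ∨ G e = (b, a)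

/-- `β₀`: the number of connected components of the underlying undirected graph
(isolated vertices count as components). -/
def beta0 (G : DG n k) (S : Finset (Fin k)) : ℕ :=
  Nat.card (Quot (adj G S))

/-- `α(H) = (−1)^{#edges}` if `H` is acyclic, `0` otherwise. -/
def alpha (G : DG n k) (S : Finset (Fin k)) : ℤ :=
  if Acyclic G S then (-1) ^ S.card else 0

/-- `σ(H) = (−1)^{β₁}` if `H` is strongly semiconnected, `0` otherwise;
here `β₁ = #edges − n + β₀`, and `(−1)^{#edges − n + β₀} = (−1)^{#edges + n + β₀}`. -/
def sigma (G : DG n k) (S : Finset (Fin k)) : ℤ :=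
  if SSC G S then (-1) ^ (S.card + n + beta0 G S) else 0

/-- The vertex `v` is isolated: incident to no edge. -/
def isolated (G : DG n k) (v : Fin n) : Prop :=
  ∀ e : Fin k, (G e).1 ≠ v ∧ (G e).2 ≠ v

/-- The vertex `v` is a sink: no edge starts at it. -/
def isSink (G : DG n k) (v : Fin n) : Prop :=
  ∀ e : Fin k, (G e).1 ≠ v

end DG
/-- An undirected graph with `n` labeled vertices and `k` labeled edges: the `ℓ`-th edge is
an unordered pair of vertices (loops allowed). -/
abbrev UG (n k : ℕ) := Fin k → Sym2 (Fin n)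

namespace UG

variable {n k : ℕ}

/-- Adjacency in the subgraph of `G` with edge-label set `S`. -/
def adj (G : UG n k) (S : Finset (Fin k)) (a b : Fin n) : Prop :=
  ∃ e ∈ S, G e = Sym2.mk a b

/-- `β₀`: the number of connected components (isolated vertices count as components). -/
def beta0 (G : UG n k) (S : Finset (Fin k)) : ℕ :=
  Nat.card (Quot (adj G S))

/-- The Potts partition function of the subgraph of `G` with edge-label set `E`:
`Z(q,v) = ∑_{H ⊆ G|_E} q^{β₀(H)} v^{#edges of H}`.  The partition function of `G` itself
is `Zsub G Finset.univ`, and that of `G` with all loops deleted (`Ĝ`) is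
`Zsub G {e | G e is not a loop}` (deleting loops changes neither `β₀` of a subgraph
nor the count of its non-loop edges, and a subgraph of `Ĝ` is exactly a subset of the
non-loop edges). -/
def Zsub (G : UG n k) (E : Finset (Fin k)) (q v : ℤ) : ℤ :=
  ∑ S ∈ E.powerset, q ^ beta0 G S * v ^ S.card

/-- The Potts partition function `Z_G(q,v)` of `G`. -/
def Z (G : UG n k) (q v : ℤ) : ℤ :=
  Zsub G Finset.univ q v

end UG

/-- The forgetful map `Γ_{n,k} → Υ_{n,k}` replacing each directed edge by its undirected
version (labels preserved). -/
def DG.undir {n k : ℕ} (G : DG n k) : UG n k :=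
  fun e => Sym2.mk (G e).1 (G e).2


/-! ### Auxiliary machinery for the proof -/

section RelAux

variable {α : Type*} {r : α → α → Prop} {a b : α}

private lemma rtg_decomp' {x y : α}
    (h : Relation.ReflTransGen (fun u v => r u v ∨ (u = a ∧ v = b)) x y) :
    Relation.ReflTransGen r x y ∨
      (Relation.ReflTransGen (fun u v => r u v ∨ (u = a ∧ v = b)) x a ∧
        Relation.ReflTransGen r b y) := by
  induction h with
  | refl => exact Or.inl .refl
  | tail h1 h2 ih =>
    rcases h2 with h2 | ⟨rfl, rfl⟩
    · rcases ih with ih | ⟨ih1, ih2⟩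
      · exact Or.inl (ih.tail h2)
      · exact Or.inr ⟨ih1, ih2.tail h2⟩
    · exact Or.inr ⟨h1, .refl⟩

private lemma rtg_new_ba
    (h : Relation.ReflTransGen (fun u v => r u v ∨ (u = a ∧ v = b)) b a) :
    Relation.ReflTransGen r b a := by
  rcases rtg_decomp' h with h | ⟨_, h⟩ <;> exact h

/-- Adding an edge `a → b` to an acyclic relation with no path `b ⇝ a` keeps it acyclic. -/
private lemma acyclic_add_edge (hr : ∀ z, ¬ Relation.TransGen r z z)
    (hba : ¬ Relation.ReflTransGen r b a) (z : α) :
    ¬ Relation.TransGen (fun u v => r u v ∨ (u = a ∧ v = b)) z z := by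
  intro h
  have h' : ∃ c, (r c z ∨ (c = a ∧ z = b)) ∧
      Relation.ReflTransGen (fun u v => r u v ∨ (u = a ∧ v = b)) z c := by
    rcases (Relation.transGen_iff _ z z).mp h with h | ⟨c, h1, h2⟩
    · exact ⟨z, h, .refl⟩
    · exact ⟨c, h2, h1.to_reflTransGen⟩
  obtain ⟨c, hcz, hzc⟩ := h'
  rcases hcz with hcz | ⟨rfl, rfl⟩
  · rcases rtg_decomp' hzc with h1 | ⟨h1, h2⟩
    · exact hr z (Relation.TransGen.tail' h1 hcz)
    · have : Relation.ReflTransGen (fun u v => r u v ∨ (u = a ∧ v = b)) b a :=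
        ((Relation.ReflTransGen.mono (r := r) (p := fun u v => r u v ∨ (u = a ∧ v = b)) (fun u v h => Or.inl h) _ _ h2).tail (Or.inl hcz)).trans h1
      exact hba (rtg_new_ba this)
  · exact hba (rtg_new_ba hzc)

/-- jump relation: `a ↔ b` identified -/
private def jrel (r : α → α → Prop) (a b : α) : α → α → Prop :=
  fun u v => r u v ∨ ((u = a ∧ v = b) ∨ (u = b ∧ v = a))

private lemma rtg_jrel_decomp (hab : ¬ Relation.ReflTransGen r a b)
    (hba : ¬ Relation.ReflTransGen r b a) {x y : α}
    (h : Relation.ReflTransGen (jrel r a b) x y) :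
    Relation.ReflTransGen r x y ∨
      (Relation.ReflTransGen r x a ∧ Relation.ReflTransGen r b y) ∨
      (Relation.ReflTransGen r x b ∧ Relation.ReflTransGen r a y) := by
  induction h using Relation.ReflTransGen.head_induction_on with
  | refl => exact Or.inl .refl
  | head h1 h2 ih =>
    rcases h1 with h1 | ⟨rfl, rfl⟩ | ⟨rfl, rfl⟩
    · rcases ih with ih | ⟨ih1, ih2⟩ | ⟨ih1, ih2⟩
      · exact Or.inl (ih.head h1)
      · exact Or.inr (Or.inl ⟨ih1.head h1, ih2⟩)
      · exact Or.inr (Or.inr ⟨ih1.head h1, ih2⟩)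
    · rcases ih with ih | ⟨ih1, ih2⟩ | ⟨ih1, ih2⟩
      · exact Or.inr (Or.inl ⟨.refl, ih⟩)
      · exact absurd ih1 hba
      · exact Or.inl ih2
    · rcases ih with ih | ⟨ih1, ih2⟩ | ⟨ih1, ih2⟩
      · exact Or.inr (Or.inr ⟨.refl, ih⟩)
      · exact Or.inl ih2
      · exact absurd ih1 hab

/-- no return path through the identified relation -/
private lemma no_return (hr : ∀ z, ¬ Relation.TransGen r z z)
    (hab : ¬ Relation.ReflTransGen r a b) (hba : ¬ Relation.ReflTransGen r b a)
    {u v : α} (huv : r u v) (h : Relation.ReflTransGen (jrel r a b) v u) : False := by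
  rcases rtg_jrel_decomp hab hba h with h1 | ⟨h1, h2⟩ | ⟨h1, h2⟩
  · exact hr u (Relation.TransGen.head' huv h1)
  · exact hba ((h2.tail huv).trans h1)
  · exact hab ((h2.tail huv).trans h1)

private lemma transGen_map {β : Type*} {s : β → β → Prop} {g : α → β}
    (h : ∀ x y, r x y → s (g x) (g y)) {x y : α}
    (ht : Relation.TransGen r x y) : Relation.TransGen s (g x) (g y) := by
  induction ht with
  | single h1 => exact Relation.TransGen.single (h _ _ h1)
  | tail _ h1 ih => exact ih.tail (h _ _ h1)

private lemma quot_card_congr {s : α → α → Prop}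
    (h1 : ∀ x y, r x y → Quot.mk s x = Quot.mk s y)
    (h2 : ∀ x y, s x y → Quot.mk r x = Quot.mk r y) :
    Nat.card (Quot r) = Nat.card (Quot s) := by
  refine Nat.card_congr ⟨Quot.lift (Quot.mk s) h1, Quot.lift (Quot.mk r) h2, ?_, ?_⟩
  · intro q; induction q using Quot.ind; rfl
  · intro q; induction q using Quot.ind; rfl

private lemma eqvGen_eq (h : ∀ x y, r x y → x = y)
    {x y : α} (he : Relation.EqvGen r x y) : x = y := by
  induction he with
  | rel _ _ h' => exact h _ _ h'
  | refl => rfl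
  | symm _ _ _ ih => exact ih.symm
  | trans _ _ _ _ _ ih1 ih2 => exact ih1.trans ih2

private lemma pair_cases {p q : α × α} (h : Sym2.mk p.1 p.2 = Sym2.mk q.1 q.2) :
    p = q ∨ p = (q.2, q.1) := by
  obtain ⟨x, y⟩ := p
  obtain ⟨u, v⟩ := q
  dsimp only at h
  rcases Sym2.eq_iff.mp h with ⟨rfl, rfl⟩ | ⟨rfl, rfl⟩
  · exact Or.inl rfl
  · exact Or.inr rfl

end RelAux

section BetaAux

variable {n k : ℕ}

private lemma beta0_empty (G : UG n k) : UG.beta0 G ∅ = n := by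
  have : Nat.card (Quot (UG.adj G ∅)) = Nat.card (Fin n) := by
    refine (Nat.card_eq_of_bijective (Quot.mk _) ⟨?_, fun q => Quot.exists_rep q⟩).symm
    intro x y h
    exact eqvGen_eq (fun x y ⟨e, he, _⟩ => absurd he (Finset.notMem_empty e)) (Quot.eq.mp h)
  simp [UG.beta0, this]

private lemma beta0_insert_loop (G : UG n k) (e : Fin k) (S : Finset (Fin k)) (c : Fin n)
    (hGe : G e = Sym2.mk c c) : UG.beta0 G (insert e S) = UG.beta0 G S := by
  refine quot_card_congr ?_ ?_
  · rintro x y ⟨ℓ, hℓ, hval⟩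
    rcases Finset.mem_insert.mp hℓ with rfl | hℓ
    · rw [hGe] at hval
      obtain ⟨rfl, rfl⟩ | ⟨rfl, rfl⟩ := Sym2.eq_iff.mp hval.symm <;> rfl
    · exact Quot.sound ⟨ℓ, hℓ, hval⟩
  · rintro x y ⟨ℓ, hℓ, hval⟩
    exact Quot.sound ⟨ℓ, Finset.mem_insert_of_mem hℓ, hval⟩

/-- contraction: identify `b` with `a`; `b` becomes isolated. -/
private lemma beta0_contract (G : UG n k) (e : Fin k) (S : Finset (Fin k)) (a b : Fin n)
    (hab : a ≠ b) (hGe : G e = Sym2.mk a b) :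
    UG.beta0 G (insert e S) + 1
      = UG.beta0 (fun ℓ => Sym2.map (fun x => if x = b then a else x) (G ℓ)) S := by
  set f : Fin n → Fin n := fun x => if x = b then a else x with hf
  have hfb : ∀ x, f x ≠ b := by
    intro x; by_cases h : x = b <;> simp [hf, h, hab]
  have hfne : ∀ x, x ≠ b → f x = x := by intro x h; simp [hf, h]
  have hfbv : f b = a := by simp [hf]
  have hfa : f a = a := hfne a hab
  set r1 := UG.adj G (insert e S) with hr1
  set r2 := UG.adj (fun ℓ => Sym2.map f (G ℓ)) S with hr2
  have hmkf : ∀ x, Quot.mk r1 (f x) = Quot.mk r1 x := by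
    intro x
    by_cases h : x = b
    · subst h; rw [hfbv]; exact Quot.sound ⟨e, Finset.mem_insert_self e S, hGe⟩
    · rw [hfne x h]
  have gsound : ∀ x y, r1 x y → Quot.mk r2 (f x) = Quot.mk r2 (f y) := by
    rintro x y ⟨ℓ, hℓ, hval⟩
    rcases Finset.mem_insert.mp hℓ with rfl | hℓ
    · rw [hGe] at hval
      have hxy : f x = f y := by
        obtain ⟨rfl, rfl⟩ | ⟨rfl, rfl⟩ := Sym2.eq_iff.mp hval.symm <;>
          rw [hfa, hfbv]
      rw [hxy]
    · refine Quot.sound ⟨ℓ, hℓ, ?_⟩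
      show Sym2.map f (G ℓ) = Sym2.mk (f x) (f y)
      rw [hval, Sym2.map_pair_eq]
  have hr2elim : ∀ x y, r2 x y → x ≠ b ∧ y ≠ b ∧ Quot.mk r1 x = Quot.mk r1 y := by
    rintro x y ⟨ℓ, hℓ, hval'⟩
    have hval : Sym2.map f (G ℓ) = Sym2.mk x y := hval'
    have hp : Sym2.mk (G ℓ).out.1 (G ℓ).out.2 = G ℓ := (G ℓ).out_eq
    set u := (G ℓ).out.1; set v := (G ℓ).out.2
    have hpy : Sym2.map f (G ℓ) = Sym2.mk (f u) (f v) := by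
      rw [← hp]; exact Sym2.map_pair_eq f u v
    rw [hpy] at hval
    have huv : Quot.mk r1 u = Quot.mk r1 v :=
      Quot.sound ⟨ℓ, Finset.mem_insert_of_mem hℓ, by rw [← hp]⟩
    obtain ⟨h1, h2⟩ | ⟨h1, h2⟩ := Sym2.eq_iff.mp hval
    · refine ⟨h1 ▸ hfb u, h2 ▸ hfb v, ?_⟩
      rw [← h1, ← h2, hmkf, hmkf]; exact huv
    · refine ⟨h2 ▸ hfb v, h1 ▸ hfb u, ?_⟩
      rw [← h1, ← h2, hmkf, hmkf]; exact huv.symm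
  set hfun : Fin n → Quot r1 ⊕ Unit :=
    fun x => if x = b then Sum.inr Unit.unit else Sum.inl (Quot.mk r1 x) with hhfun
  have hsound : ∀ x y, r2 x y → hfun x = hfun y := by
    intro x y h
    obtain ⟨hx, hy, hq⟩ := hr2elim x y h
    simp [hhfun, hx, hy, hq]
  have key : Nat.card (Quot r2) = Nat.card (Quot r1 ⊕ Unit) := by
    refine Nat.card_congr ⟨Quot.lift hfun hsound,
      Sum.elim (Quot.lift (fun x => Quot.mk r2 (f x)) gsound) (fun _ => Quot.mk r2 b), ?_, ?_⟩
    · intro q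
      induction q using Quot.ind with
      | _ x =>
        by_cases h : x = b
        · subst h; simp [hhfun]
        · show Sum.elim _ _ (hfun x) = Quot.mk r2 x
          rw [hhfun]
          simp only [if_neg h, Sum.elim_inl]
          show Quot.mk r2 (f x) = Quot.mk r2 x
          rw [hfne x h]
    · intro s
      rcases s with q | u
      · induction q using Quot.ind with
        | _ x =>
          show Quot.lift hfun hsound (Quot.mk r2 (f x)) = Sum.inl (Quot.mk r1 x)
          show hfun (f x) = _
          rw [hhfun]
          simp only [if_neg (hfb x), Sum.inl.injEq]
          exact hmkf x
      · show Quot.lift hfun hsound (Quot.mk r2 b) = Sum.inr u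
        show hfun b = _
        simp [hhfun]
  rw [UG.beta0, UG.beta0, ← hr1, ← hr2, key, Nat.card_sum]
  simp

end BetaAux

section AOAux

variable {n k : ℕ}

/-- The set of acyclic orientations of the edges of `G` in `E` (padded by `d` off `E`). -/
private def AOs (G : UG n k) (E : Finset (Fin k)) (d : Fin n × Fin n) : Finset (DG n k) :=
  Finset.univ.filter fun Φ =>
    (∀ ℓ ∈ E, Sym2.mk (Φ ℓ).1 (Φ ℓ).2 = G ℓ) ∧ (∀ ℓ ∉ E, Φ ℓ = d) ∧ DG.Acyclic Φ E

private lemma mem_AOs {G : UG n k} {E : Finset (Fin k)} {d : Fin n × Fin n} {Φ : DG n k} :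
    Φ ∈ AOs G E d ↔
      (∀ ℓ ∈ E, Sym2.mk (Φ ℓ).1 (Φ ℓ).2 = G ℓ) ∧ (∀ ℓ ∉ E, Φ ℓ = d) ∧ DG.Acyclic Φ E := by
  simp [AOs]

private lemma acyclic_empty (Φ : DG n k) : DG.Acyclic Φ (∅ : Finset (Fin k)) := by
  intro z hz
  cases hz with
  | single h => obtain ⟨ℓ, hℓ, -⟩ := h; exact absurd hℓ (Finset.notMem_empty ℓ)
  | tail _ h => obtain ⟨ℓ, hℓ, -⟩ := h; exact absurd hℓ (Finset.notMem_empty ℓ)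

private lemma AOs_empty (G : UG n k) (d : Fin n × Fin n) :
    AOs G ∅ d = {fun _ => d} := by
  ext Φ
  rw [mem_AOs, Finset.mem_singleton]
  constructor
  · rintro ⟨-, h2, -⟩
    exact funext fun ℓ => h2 ℓ (Finset.notMem_empty ℓ)
  · rintro rfl
    exact ⟨fun ℓ hℓ => absurd hℓ (Finset.notMem_empty ℓ), fun ℓ _ => rfl, acyclic_empty _⟩

private lemma step_mono {Φ Ψ : DG n k} {S T : Finset (Fin k)}
    (hST : S ⊆ T) (h : ∀ ℓ ∈ S, Φ ℓ = Ψ ℓ) {x y : Fin n}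
    (hs : DG.step Φ S x y) : DG.step Ψ T x y := by
  obtain ⟨ℓ, hℓ, hval⟩ := hs
  exact ⟨ℓ, hST hℓ, (h ℓ hℓ) ▸ hval⟩

/-- counting orientations with the distinguished edge directed `a → b` -/
private lemma card_dir (G : UG n k) (E : Finset (Fin k)) (d : Fin n × Fin n) (e : Fin k)
    (he : e ∈ E) (a b : Fin n) (hGe : G e = Sym2.mk a b) :
    ((AOs G E d).filter (fun Φ => Φ e = (a, b))).card
      = ((AOs G (E.erase e) d).filter
          (fun Ψ => ¬ Relation.ReflTransGen (DG.step Ψ (E.erase e)) b a)).card := by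
  have hE : insert e (E.erase e) = E := Finset.insert_erase he
  refine Finset.card_bij' (fun Φ _ => Function.update Φ e d)
    (fun Ψ _ => Function.update Ψ e (a, b)) ?_ ?_ ?_ ?_
  · intro Φ hΦ
    show Function.update Φ e d ∈ _
    rw [Finset.mem_filter] at hΦ
    obtain ⟨hΦ, hedge⟩ := hΦ
    rw [mem_AOs] at hΦ
    obtain ⟨hpin, hoff, hacy⟩ := hΦ
    have heq : ∀ ℓ ∈ E.erase e, Function.update Φ e d ℓ = Φ ℓ := fun ℓ hℓ =>
      Function.update_of_ne (Finset.mem_erase.mp hℓ).1 _ _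
    rw [Finset.mem_filter, mem_AOs]
    refine ⟨⟨?_, ?_, ?_⟩, ?_⟩
    · intro ℓ hℓ
      rw [heq ℓ hℓ]
      exact hpin ℓ (Finset.mem_of_mem_erase hℓ)
    · intro ℓ hℓ
      by_cases h : ℓ = e
      · subst h; exact Function.update_self _ _ _
      · rw [Function.update_of_ne h]
        exact hoff ℓ (fun hmem => hℓ (Finset.mem_erase.mpr ⟨h, hmem⟩))
    · intro z hz
      exact hacy z (Relation.TransGen.mono (r := DG.step (Function.update Φ e d) (E.erase e)) (p := DG.step Φ E) (fun x y hs => step_mono (Finset.erase_subset e E) heq hs) _ _ hz)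
    · intro hrtg
      have h1 : Relation.ReflTransGen (DG.step Φ E) b a :=
        Relation.ReflTransGen.mono (r := DG.step (Function.update Φ e d) (E.erase e)) (p := DG.step Φ E) (fun x y hs => step_mono (Finset.erase_subset e E) heq hs) _ _ hrtg
      have h2 : DG.step Φ E a b := ⟨e, he, by rw [hedge]⟩
      exact hacy a (Relation.TransGen.head' h2 h1)
  · intro Ψ hΨ
    show Function.update Ψ e (a, b) ∈ _
    rw [Finset.mem_filter] at hΨ
    obtain ⟨hΨ, hnba⟩ := hΨ
    rw [mem_AOs] at hΨ
    obtain ⟨hpin, hoff, hacy⟩ := hΨ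
    rw [Finset.mem_filter, mem_AOs]
    have hupd : ∀ ℓ ∈ E.erase e, Function.update Ψ e (a, b) ℓ = Ψ ℓ := fun ℓ hℓ =>
      Function.update_of_ne (Finset.mem_erase.mp hℓ).1 _ _
    refine ⟨⟨?_, ?_, ?_⟩, Function.update_self _ _ _⟩
    · intro ℓ hℓ
      by_cases h : ℓ = e
      · subst h
        rw [Function.update_self, hGe]
      · rw [Function.update_of_ne h]
        exact hpin ℓ (Finset.mem_erase.mpr ⟨h, hℓ⟩)
    · intro ℓ hℓ
      have h : ℓ ≠ e := fun hh => hℓ (hh ▸ he)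
      rw [Function.update_of_ne h]
      exact hoff ℓ (fun hmem => hℓ (Finset.mem_of_mem_erase hmem))
    · intro z hz
      have hiff : ∀ x y, DG.step (Function.update Ψ e (a, b)) E x y ↔
          (DG.step Ψ (E.erase e) x y ∨ (x = a ∧ y = b)) := by
        intro x y
        constructor
        · rintro ⟨ℓ, hℓ, hval⟩
          by_cases h : ℓ = e
          · subst h
            rw [Function.update_self] at hval
            exact Or.inr ⟨congrArg Prod.fst hval.symm, congrArg Prod.snd hval.symm⟩
          · exact Or.inl ⟨ℓ, Finset.mem_erase.mpr ⟨h, hℓ⟩, by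
              rw [Function.update_of_ne h] at hval; exact hval⟩
        · rintro (⟨ℓ, hℓ, hval⟩ | ⟨rfl, rfl⟩)
          · exact ⟨ℓ, Finset.mem_of_mem_erase hℓ,
              (Function.update_of_ne (Finset.mem_erase.mp hℓ).1 _ _) ▸ hval⟩
          · exact ⟨e, he, Function.update_self _ _ _⟩
      exact acyclic_add_edge hacy hnba z (Relation.TransGen.mono (r := DG.step (Function.update Ψ e (a, b)) E) (p := fun x y => DG.step Ψ (E.erase e) x y ∨ (x = a ∧ y = b)) (fun x y hs => (hiff x y).mp hs) _ _ hz)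
  · intro Φ hΦ
    show Function.update (Function.update Φ e d) e (a, b) = Φ
    rw [Finset.mem_filter] at hΦ
    funext ℓ
    by_cases h : ℓ = e
    · subst h
      rw [Function.update_self, hΦ.2]
    · rw [Function.update_of_ne h, Function.update_of_ne h]
  · intro Ψ hΨ
    show Function.update (Function.update Ψ e (a, b)) e d = Ψ
    rw [Finset.mem_filter, mem_AOs] at hΨ
    funext ℓ
    by_cases h : ℓ = e
    · subst h
      rw [Function.update_self, (hΨ.1.2.1 ℓ (Finset.notMem_erase ℓ E))]
    · rw [Function.update_of_ne h, Function.update_of_ne h]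

end AOAux

/-- the fiber bijection between incomparable orientations and orientations of the
contracted graph -/
private lemma card_B2_eq_C (G : UG n k) (E' : Finset (Fin k)) (d : Fin n × Fin n)
    (a b : Fin n) (hab : a ≠ b) :
    ((AOs G E' d).filter (fun Ψ => ¬ Relation.ReflTransGen (DG.step Ψ E') b a ∧
        ¬ Relation.ReflTransGen (DG.step Ψ E') a b)).card
      = (AOs (fun ℓ => Sym2.map (fun x => if x = b then a else x) (G ℓ)) E' d).card := by
  set f : Fin n → Fin n := fun x => if x = b then a else x with hf
  have hfb : ∀ x, f x ≠ b := by intro x; by_cases h : x = b <;> simp [hf, h, hab]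
  have hfne : ∀ x, x ≠ b → f x = x := by intro x h; simp [hf, h]
  have hfbv : f b = a := by simp [hf]
  have hfa : f a = a := hfne a hab
  have hfcoll : ∀ u v, f u = f v → u ≠ v → ((u = a ∧ v = b) ∨ (u = b ∧ v = a)) := by
    intro u v huv hne
    by_cases hu : u = b
    · subst hu
      rw [hfbv, hfne v (fun h => hne h.symm)] at huv
      exact Or.inr ⟨rfl, huv.symm⟩
    · rw [hfne u hu] at huv
      by_cases hv : v = b
      · subst hv; rw [hfbv] at huv; exact Or.inl ⟨huv, rfl⟩
      · rw [hfne v hv] at huv; exact absurd huv hne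
  have hjv : ∀ (Φ' : DG n k) (ℓ : Fin k), ℓ ∈ E' → Sym2.mk (Φ' ℓ).1 (Φ' ℓ).2 = Sym2.map f (G ℓ) →
      Sym2.mk (if Φ' ℓ = (f (G ℓ).out.1, f (G ℓ).out.2) then (G ℓ).out
        else ((G ℓ).out.2, (G ℓ).out.1)).1 (if Φ' ℓ = (f (G ℓ).out.1, f (G ℓ).out.2) then (G ℓ).out
        else ((G ℓ).out.2, (G ℓ).out.1)).2 = G ℓ
      ∧ (f (if Φ' ℓ = (f (G ℓ).out.1, f (G ℓ).out.2) then (G ℓ).out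
        else ((G ℓ).out.2, (G ℓ).out.1)).1,
        f (if Φ' ℓ = (f (G ℓ).out.1, f (G ℓ).out.2) then (G ℓ).out
        else ((G ℓ).out.2, (G ℓ).out.1)).2) = Φ' ℓ := by
    intro Φ' ℓ hℓ hpin
    have hp : Sym2.mk (G ℓ).out.1 (G ℓ).out.2 = G ℓ := (G ℓ).out_eq
    have hmk : Sym2.mk (Φ' ℓ).1 (Φ' ℓ).2 = Sym2.mk (f (G ℓ).out.1) (f (G ℓ).out.2) := by
      rw [hpin]
      conv_lhs => rw [← hp]
      exact Sym2.map_pair_eq f _ _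
    by_cases hcase : Φ' ℓ = (f (G ℓ).out.1, f (G ℓ).out.2)
    · rw [if_pos hcase]
      exact ⟨hp, hcase.symm⟩
    · rw [if_neg hcase]
      rcases pair_cases (p := Φ' ℓ) (q := (f (G ℓ).out.1, f (G ℓ).out.2)) hmk with heq | heq
      · exact absurd heq hcase
      · constructor
        · exact Sym2.eq_swap.trans hp
        · exact heq.symm
  refine Finset.card_bij'
    (fun Ψ _ => fun ℓ => if ℓ ∈ E' then (f (Ψ ℓ).1, f (Ψ ℓ).2) else d)
    (fun Φ' _ => fun ℓ => if ℓ ∈ E' then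
        (if Φ' ℓ = (f (G ℓ).out.1, f (G ℓ).out.2) then (G ℓ).out
         else ((G ℓ).out.2, (G ℓ).out.1)) else d) ?_ ?_ ?_ ?_
  · intro Ψ hΨ
    show (fun ℓ => if ℓ ∈ E' then (f (Ψ ℓ).1, f (Ψ ℓ).2) else d) ∈ _
    rw [Finset.mem_filter, mem_AOs] at hΨ
    obtain ⟨⟨hpin, hoff, hacy⟩, hnba, hnab⟩ := hΨ
    rw [mem_AOs]
    refine ⟨?_, ?_, ?_⟩
    · intro ℓ hℓ
      show Sym2.mk (if ℓ ∈ E' then (f (Ψ ℓ).1, f (Ψ ℓ).2) else d).1 (if ℓ ∈ E' then (f (Ψ ℓ).1, f (Ψ ℓ).2) else d).2 = Sym2.map f (G ℓ)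
      rw [if_pos hℓ, ← hpin ℓ hℓ]
      exact (Sym2.map_pair_eq f _ _).symm
    · intro ℓ hℓ
      show (if ℓ ∈ E' then (f (Ψ ℓ).1, f (Ψ ℓ).2) else d) = d
      rw [if_neg hℓ]
    · intro z hz
      have hstep : ∀ x y,
          DG.step (fun ℓ => if ℓ ∈ E' then (f (Ψ ℓ).1, f (Ψ ℓ).2) else d) E' x y →
          ∃ u v, DG.step Ψ E' u v ∧ f u = x ∧ f v = y := by
        rintro x y ⟨ℓ, hℓ, hval⟩
        simp only [if_pos hℓ] at hval
        exact ⟨(Ψ ℓ).1, (Ψ ℓ).2, ⟨ℓ, hℓ, rfl⟩,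
          congrArg Prod.fst hval, congrArg Prod.snd hval⟩
      have hpre : ∀ u x, f u = x →
          Relation.ReflTransGen (jrel (DG.step Ψ E') a b) x u := by
        intro u x hux
        by_cases h : u = b
        · subst h; rw [hfbv] at hux; subst hux
          exact Relation.ReflTransGen.single (Or.inr (Or.inl ⟨rfl, rfl⟩))
        · rw [hfne u h] at hux; subst hux; exact .refl
      have hpost : ∀ v y, f v = y →
          Relation.ReflTransGen (jrel (DG.step Ψ E') a b) v y := by
        intro v y hvy
        by_cases h : v = b
        · subst h; rw [hfbv] at hvy; subst hvy
          exact Relation.ReflTransGen.single (Or.inr (Or.inr ⟨rfl, rfl⟩))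
        · rw [hfne v h] at hvy; subst hvy; exact .refl
      have hex : ∃ c,
          DG.step (fun ℓ => if ℓ ∈ E' then (f (Ψ ℓ).1, f (Ψ ℓ).2) else d) E' c z ∧
          Relation.ReflTransGen
            (DG.step (fun ℓ => if ℓ ∈ E' then (f (Ψ ℓ).1, f (Ψ ℓ).2) else d) E') z c := by
        rcases (Relation.transGen_iff _ z z).mp hz with h | ⟨c, h1, h2⟩
        · exact ⟨z, h, .refl⟩
        · exact ⟨c, h2, h1.to_reflTransGen⟩
      obtain ⟨c, h2, h1⟩ := hex
      obtain ⟨u, v, huv, hu, hv⟩ := hstep _ _ h2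
      have hlift : Relation.ReflTransGen (jrel (DG.step Ψ E') a b) z c := by
        clear hz huv hu hv h2
        induction h1 with
        | refl => exact .refl
        | tail _ h3' ih =>
          obtain ⟨u', v', huv', hu', hv'⟩ := hstep _ _ h3'
          exact ih.trans ((hpre u' _ hu').trans
            (Relation.ReflTransGen.head (Or.inl huv') (hpost v' _ hv')))
      exact no_return hacy hnab hnba huv (((hpost v z hv).trans hlift).trans (hpre u c hu))
  · intro Φ' hΦ'
    show (fun ℓ => if ℓ ∈ E' then
        (if Φ' ℓ = (f (G ℓ).out.1, f (G ℓ).out.2) then (G ℓ).out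
         else ((G ℓ).out.2, (G ℓ).out.1)) else d) ∈ _
    rw [mem_AOs] at hΦ'
    obtain ⟨hpin', hoff', hacy'⟩ := hΦ'
    have hmap : ∀ ℓ ∈ E',
        (f ((if ℓ ∈ E' then
          (if Φ' ℓ = (f (G ℓ).out.1, f (G ℓ).out.2) then (G ℓ).out
           else ((G ℓ).out.2, (G ℓ).out.1)) else d)).1,
         f ((if ℓ ∈ E' then
          (if Φ' ℓ = (f (G ℓ).out.1, f (G ℓ).out.2) then (G ℓ).out
           else ((G ℓ).out.2, (G ℓ).out.1)) else d)).2) = Φ' ℓ := by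
      intro ℓ hℓ
      rw [if_pos hℓ]
      exact (hjv Φ' ℓ hℓ (hpin' ℓ hℓ)).2
    have hsmap : ∀ u v,
        DG.step (fun ℓ => if ℓ ∈ E' then
          (if Φ' ℓ = (f (G ℓ).out.1, f (G ℓ).out.2) then (G ℓ).out
           else ((G ℓ).out.2, (G ℓ).out.1)) else d) E' u v →
        DG.step Φ' E' (f u) (f v) := by
      rintro u v ⟨ℓ, hℓ, hval⟩
      refine ⟨ℓ, hℓ, ?_⟩
      rw [← hmap ℓ hℓ]
      simp only [] at hval ⊢
      rw [hval]
    rw [Finset.mem_filter, mem_AOs]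
    refine ⟨⟨?_, ?_, ?_⟩, ?_, ?_⟩
    · intro ℓ hℓ
      show Sym2.mk (if ℓ ∈ E' then _ else d).1 (if ℓ ∈ E' then _ else d).2 = G ℓ
      rw [if_pos hℓ]
      exact (hjv Φ' ℓ hℓ (hpin' ℓ hℓ)).1
    · intro ℓ hℓ
      show (if ℓ ∈ E' then _ else d) = d
      rw [if_neg hℓ]
    · intro z hz
      exact hacy' (f z) (transGen_map hsmap hz)
    · intro h
      rcases Relation.reflTransGen_iff_eq_or_transGen.mp h with h' | h'
      · exact hab h'
      · have := transGen_map hsmap h'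
        rw [hfbv, hfa] at this
        exact hacy' a this
    · intro h
      rcases Relation.reflTransGen_iff_eq_or_transGen.mp h with h' | h'
      · exact hab h'.symm
      · have := transGen_map hsmap h'
        rw [hfbv, hfa] at this
        exact hacy' a this
  · intro Ψ hΨ
    rw [Finset.mem_filter, mem_AOs] at hΨ
    obtain ⟨⟨hpin, hoff, hacy⟩, hnba, hnab⟩ := hΨ
    show (fun ℓ => if ℓ ∈ E' then _ else d) = Ψ
    funext ℓ
    by_cases hℓ : ℓ ∈ E'
    · simp only [if_pos hℓ]
      have hp : Sym2.mk (G ℓ).out.1 (G ℓ).out.2 = G ℓ := (G ℓ).out_eq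
      have hcases : Ψ ℓ = (G ℓ).out ∨ Ψ ℓ = ((G ℓ).out.2, (G ℓ).out.1) :=
        pair_cases ((hpin ℓ hℓ).trans hp.symm)
      have hout_ne : (G ℓ).out.1 ≠ (G ℓ).out.2 := by
        intro hq
        rcases hcases with hc | hc
        · exact hacy (G ℓ).out.1 (Relation.TransGen.single
            ⟨ℓ, hℓ, by rw [hc]; exact Prod.ext rfl hq.symm⟩)
        · exact hacy (G ℓ).out.1 (Relation.TransGen.single
            ⟨ℓ, hℓ, by rw [hc]; exact Prod.ext hq.symm rfl⟩)
      have hfinj : f (G ℓ).out.1 ≠ f (G ℓ).out.2 := by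
        intro hq
        rcases hfcoll _ _ hq hout_ne with ⟨h1, h2⟩ | ⟨h1, h2⟩
        · rcases hcases with hc | hc
          · exact hnab (Relation.ReflTransGen.single ⟨ℓ, hℓ, by rw [hc]; exact Prod.ext h1 h2⟩)
          · exact hnba (Relation.ReflTransGen.single ⟨ℓ, hℓ, by rw [hc]; exact Prod.ext h2 h1⟩)
        · rcases hcases with hc | hc
          · exact hnba (Relation.ReflTransGen.single ⟨ℓ, hℓ, by rw [hc]; exact Prod.ext h1 h2⟩)
          · exact hnab (Relation.ReflTransGen.single ⟨ℓ, hℓ, by rw [hc]; exact Prod.ext h2 h1⟩)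
      rcases hcases with hc | hc
      · rw [hc]
        simp only [if_pos hℓ]
        simp
      · rw [hc]
        simp only [if_pos hℓ]
        rw [if_neg (fun hcon => hfinj (congrArg Prod.fst hcon).symm)]
    · simp only [if_neg hℓ]
      exact (hoff ℓ hℓ).symm
  · intro Φ' hΦ'
    rw [mem_AOs] at hΦ'
    obtain ⟨hpin', hoff', hacy'⟩ := hΦ'
    show (fun ℓ => if ℓ ∈ E' then _ else d) = Φ'
    funext ℓ
    by_cases hℓ : ℓ ∈ E'
    · simp only [if_pos hℓ]
      exact (hjv Φ' ℓ hℓ (hpin' ℓ hℓ)).2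
    · simp only [if_neg hℓ]
      exact (hoff' ℓ hℓ).symm

private lemma AOs_card_split (G : UG n k) (E : Finset (Fin k)) (d : Fin n × Fin n)
    (e : Fin k) (he : e ∈ E) (a b : Fin n) (hab : a ≠ b) (hGe : G e = Sym2.mk a b) :
    (AOs G E d).card
      = ((AOs G E d).filter (fun Φ => Φ e = (a, b))).card
        + ((AOs G E d).filter (fun Φ => Φ e = (b, a))).card := by
  have hset : (AOs G E d).filter (fun Φ => ¬ Φ e = (a, b))
      = (AOs G E d).filter (fun Φ => Φ e = (b, a)) := by
    refine Finset.filter_congr ?_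
    intro Φ hΦ
    rw [mem_AOs] at hΦ
    have hc := pair_cases (p := Φ e) (q := (a, b)) ((hΦ.1 e he).trans hGe)
    constructor
    · intro hne
      rcases hc with h | h
      · exact absurd h hne
      · exact h
    · intro hba hcon
      rw [hcon] at hba
      exact hab (congrArg Prod.fst hba)
  rw [← Finset.card_filter_add_card_filter_not (p := fun Φ => Φ e = (a, b)), hset]

private lemma B_count (G : UG n k) (E' : Finset (Fin k)) (d : Fin n × Fin n)
    (a b : Fin n) (hab : a ≠ b) :
    ((AOs G E' d).filter (fun Ψ => ¬ Relation.ReflTransGen (DG.step Ψ E') b a)).card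
      + ((AOs G E' d).filter (fun Ψ => ¬ Relation.ReflTransGen (DG.step Ψ E') a b)).card
    = (AOs G E' d).card
      + ((AOs G E' d).filter (fun Ψ => ¬ Relation.ReflTransGen (DG.step Ψ E') b a ∧
          ¬ Relation.ReflTransGen (DG.step Ψ E') a b)).card := by
  have hnot : ∀ Ψ ∈ AOs G E' d, ¬ (Relation.ReflTransGen (DG.step Ψ E') b a ∧
      Relation.ReflTransGen (DG.step Ψ E') a b) := by
    rintro Ψ hΨ ⟨h1, h2⟩
    rw [mem_AOs] at hΨ
    rcases Relation.reflTransGen_iff_eq_or_transGen.mp h2 with h' | h'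
    · exact hab h'.symm
    · exact hΨ.2.2 b (Relation.TransGen.trans_right h1 h')
  have hu : ((AOs G E' d).filter (fun Ψ => ¬ Relation.ReflTransGen (DG.step Ψ E') b a))
      ∪ ((AOs G E' d).filter (fun Ψ => ¬ Relation.ReflTransGen (DG.step Ψ E') a b))
      = AOs G E' d := by
    rw [← Finset.filter_or]
    refine Finset.filter_true_of_mem ?_
    intro Ψ hΨ
    by_contra hcon
    push_neg at hcon
    exact hnot Ψ hΨ hcon
  have hi : ((AOs G E' d).filter (fun Ψ => ¬ Relation.ReflTransGen (DG.step Ψ E') b a))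
      ∩ ((AOs G E' d).filter (fun Ψ => ¬ Relation.ReflTransGen (DG.step Ψ E') a b))
      = (AOs G E' d).filter (fun Ψ => ¬ Relation.ReflTransGen (DG.step Ψ E') b a ∧
          ¬ Relation.ReflTransGen (DG.step Ψ E') a b) := by
    rw [Finset.filter_and]
  rw [← Finset.card_union_add_card_inter, hu, hi]

private lemma AOs_loop (G : UG n k) (E : Finset (Fin k)) (d : Fin n × Fin n)
    (e : Fin k) (he : e ∈ E) (c : Fin n)
    (hGe : G e = Sym2.mk c c) : AOs G E d = ∅ := by
  rw [Finset.eq_empty_iff_forall_notMem]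
  intro Φ hΦ
  rw [mem_AOs] at hΦ
  obtain ⟨hpin, -, hacy⟩ := hΦ
  have hΦe : Φ e = (c, c) := by
    rcases pair_cases (p := Φ e) (q := (c, c)) ((hpin e he).trans hGe) with h | h <;> exact h
  exact hacy c (Relation.TransGen.single ⟨e, he, hΦe⟩)

private lemma key_lemma (n k : ℕ) (d : Fin n × Fin n) (E : Finset (Fin k)) :
    ∀ G : UG n k, UG.Zsub G E (-1) (-1) = (-1) ^ n * ((AOs G E d).card : ℤ) := by
  induction E using Finset.strongInduction with
  | _ E ih =>
    intro G
    rcases E.eq_empty_or_nonempty with rfl | ⟨e, he⟩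
    · rw [UG.Zsub, Finset.powerset_empty, Finset.sum_singleton, beta0_empty,
        Finset.card_empty, pow_zero, mul_one, AOs_empty, Finset.card_singleton]
      simp
    · have hE : insert e (E.erase e) = E := Finset.insert_erase he
      have he' : e ∉ E.erase e := Finset.notMem_erase e E
      have hss : E.erase e ⊂ E := Finset.erase_ssubset he
      have hGe : G e = Sym2.mk (G e).out.1 (G e).out.2 := ((G e).out_eq).symm
      set a := (G e).out.1 with ha
      set b := (G e).out.2 with hb
      have hsum : UG.Zsub G E (-1) (-1)
          = ∑ S ∈ (E.erase e).powerset, (-1 : ℤ) ^ UG.beta0 G S * (-1) ^ S.card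
            + ∑ S ∈ (E.erase e).powerset,
                (-1 : ℤ) ^ UG.beta0 G (insert e S) * (-1) ^ (insert e S).card := by
        rw [UG.Zsub]
        conv_lhs => rw [← hE]
        exact Finset.sum_powerset_insert he' _
      by_cases hab : a = b
      · have hGe' : G e = Sym2.mk b b := by rw [hGe, hab]
        have hterm : ∀ S ∈ (E.erase e).powerset,
            (-1 : ℤ) ^ UG.beta0 G (insert e S) * (-1) ^ (insert e S).card
            = - ((-1 : ℤ) ^ UG.beta0 G S * (-1) ^ S.card) := by
          intro S hS
          have heS : e ∉ S := fun h => he' (Finset.mem_powerset.mp hS h)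
          rw [beta0_insert_loop G e S b hGe', Finset.card_insert_of_notMem heS, pow_succ]
          ring
        rw [hsum, Finset.sum_congr rfl hterm, AOs_loop G E d e he b hGe']
        simp
      · have hterm : ∀ S ∈ (E.erase e).powerset,
            (-1 : ℤ) ^ UG.beta0 G (insert e S) * (-1) ^ (insert e S).card
            = (-1 : ℤ) ^ UG.beta0
                (fun ℓ => Sym2.map (fun x => if x = b then a else x) (G ℓ)) S
              * (-1) ^ S.card := by
          intro S hS
          have heS : e ∉ S := fun h => he' (Finset.mem_powerset.mp hS h)
          rw [← beta0_contract G e S a b hab hGe,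
            Finset.card_insert_of_notMem heS, pow_succ, pow_succ]
          ring
        have h1 := ih (E.erase e) hss G
        have h2 := ih (E.erase e) hss
          (fun ℓ => Sym2.map (fun x => if x = b then a else x) (G ℓ))
        have hGe2 : G e = Sym2.mk b a := by rw [hGe]; exact Sym2.eq_swap
        have hcard : (AOs G E d).card
            = (AOs G (E.erase e) d).card
              + (AOs (fun ℓ => Sym2.map (fun x => if x = b then a else x) (G ℓ))
                  (E.erase e) d).card := by
          rw [AOs_card_split G E d e he a b hab hGe,
            card_dir G E d e he a b hGe, card_dir G E d e he b a hGe2,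
            B_count G (E.erase e) d a b hab, card_B2_eq_C G (E.erase e) d a b hab]
        rw [hsum, Finset.sum_congr rfl hterm]
        rw [show (∑ S ∈ (E.erase e).powerset, (-1:ℤ) ^ UG.beta0 G S * (-1) ^ S.card)
          = UG.Zsub G (E.erase e) (-1) (-1) from rfl]
        rw [show (∑ S ∈ (E.erase e).powerset, (-1:ℤ) ^ UG.beta0
              (fun ℓ => Sym2.map (fun x => if x = b then a else x) (G ℓ)) S * (-1) ^ S.card)
          = UG.Zsub (fun ℓ => Sym2.map (fun x => if x = b then a else x) (G ℓ))
              (E.erase e) (-1) (-1) from rfl]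
        rw [h1, h2, hcard]
        push_cast
        ring



/-- For every undirected graph `G ∈ Υ_{n,k}`,
`Z_G(−1,−1) = (−1)^n · #{Φ ∈ AC_{n,k} : |Φ| = G}`, the number of acyclic orientations
of `G` (this number is `0` if `G` has a loop). -/
theorem potts_acyclic_orientations (n k : ℕ) (G : UG n k) :
    UG.Z G (-1) (-1)
      = (-1) ^ n
          * (Nat.card {Φ : DG n k // DG.Acyclic Φ Finset.univ ∧ DG.undir Φ = G} : ℤ) := by
  cases n with
  | zero =>
    cases k with
    | zero =>
      have h1 : UG.Z G (-1) (-1) = 1 := by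
        rw [UG.Z, Finset.univ_eq_empty, UG.Zsub, Finset.powerset_empty,
          Finset.sum_singleton, beta0_empty]
        simp
      have h2 : Nat.card {Φ : DG 0 0 // DG.Acyclic Φ Finset.univ ∧ DG.undir Φ = G} = 1 := by
        rw [Nat.card_eq_one_iff_unique]
        constructor
        · exact ⟨fun Φ1 Φ2 => Subtype.ext (funext fun e => e.elim0)⟩
        · refine ⟨⟨fun e => e.elim0, fun z => z.elim0, funext fun e => e.elim0⟩⟩
      rw [h1, h2]
      simp
    | succ k' => exact ((G ⟨0, k'.succ_pos⟩).out.1).elim0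
  | succ m =>
    have hkey := key_lemma (m + 1) k ((0 : Fin (m + 1)), (0 : Fin (m + 1))) Finset.univ G
    rw [UG.Z, hkey]
    have hcard : Nat.card {Φ : DG (m + 1) k // DG.Acyclic Φ Finset.univ ∧ DG.undir Φ = G}
        = (AOs G Finset.univ ((0 : Fin (m + 1)), (0 : Fin (m + 1)))).card := by
      rw [Nat.card_eq_fintype_card, Fintype.card_subtype]
      congr 1
      ext Φ
      rw [mem_AOs, Finset.mem_filter]
      constructor
      · rintro ⟨-, hacy, hundir⟩
        refine ⟨fun ℓ _ => ?_, fun ℓ hℓ => absurd (Finset.mem_univ ℓ) hℓ, hacy⟩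
        rw [← hundir]; rfl
      · rintro ⟨hpin, -, hacy⟩
        exact ⟨Finset.mem_univ Φ, hacy, funext fun ℓ => hpin ℓ (Finset.mem_univ ℓ)⟩
    rw [hcard]
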